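/- (Theorem 1, GUUB) Let ξ, η : ℝ → ℝ⁴ be differentiable on [0,∞), z₁(t) = (ξ(t), η(t)) ∈ ℝ⁸, and let M : ℝ → Matrix (Fin 4) (Fin 4) ℝ be differentiable with each M(t) symmetric and c_m‖x‖² ≤ xᵀM(t)x ≤ c_M‖x‖² for all x ∈ ℝ⁴ (0 < c_m ≤ c_M). Let C, B : ℝ → Matrix (Fin 4) (Fin 4) ℝ satisfy η(t)ᵀ(½M'(t) − C(t))η(t) = 0 and xᵀB(t)x ≥ B̲‖x‖² for all x ∈ ℝ⁴ with B̲ ≥ 1/4. Let χ : ℝ → ℝ⁴ satisfy ‖χ(t)‖ ≤ ρ(‖z₁(t)‖) where ρ(s) = ρ₁ + ρ₂ s + ρ₃ s², ρ₁, ρ₂, ρ₃ ≥ 0. Suppose for gains α, k₁, ε > 0 the closed-loop equations ξ'(t) = η(t) − α ξ(t) and M(t)η'(t) = χ(t) − C(t)η(t) − ξ(t) − B(t)(k₁ η(t) + (1/ε) ρ(‖z₁(t)‖)² η(t)) hold for t ≥ 0. Then the Lyapunov function V(t) = ½‖ξ(t)‖² + ½η(t)ᵀM(t)η(t) satisfies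 V(t) ≤ V(0) e^{−δ t} + (ε/δ)(1 − e^{−δ t}) for all t ≥ 0, where δ = min(α, B̲ k₁)/b and b = max(1/2, c_M/2). -/

import Mathlib

open scoped RealInnerProductSpace

/-- The quadratic form `xᵀ A x`. -/
noncomputable def quadForm (A : Matrix (Fin 4) (Fin 4) ℝ) (x : EuclideanSpace ℝ (Fin 4)) : ℝ :=
  ∑ i, ∑ j, x i * A i j * x j

/-- The action of a matrix on a vector of `EuclideanSpace ℝ (Fin 4)` (i.e. `A x`). -/
noncomputable def mulVecE (A : Matrix (Fin 4) (Fin 4) ℝ) (x : EuclideanSpace ℝ (Fin 4)) :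
    EuclideanSpace ℝ (Fin 4) :=
  (EuclideanSpace.equiv (Fin 4) ℝ).symm (A.mulVec ((EuclideanSpace.equiv (Fin 4) ℝ) x))

/-- The stacked vector `z = (x, y) ∈ ℝ⁸` with `‖z‖² = ‖x‖² + ‖y‖²`. -/
noncomputable def stack (x y : EuclideanSpace ℝ (Fin 4)) :
    WithLp 2 (EuclideanSpace ℝ (Fin 4) × EuclideanSpace ℝ (Fin 4)) :=
  (WithLp.equiv 2 _).symm (x, y)

lemma my_inner (x y : EuclideanSpace ℝ (Fin 4)) : ⟪x, y⟫ = ∑ i, x i * y i := by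
  simp [PiLp.inner_apply, RCLike.inner_apply, mul_comm]

lemma inner_mulVecE (A : Matrix (Fin 4) (Fin 4) ℝ) (x y : EuclideanSpace ℝ (Fin 4)) :
    ⟪y, mulVecE A x⟫ = ∑ i, ∑ j, y i * A i j * x j := by
  simp [my_inner, mulVecE, Matrix.mulVec, dotProduct, Finset.mul_sum, mul_assoc]

lemma quadForm_eq_inner (A : Matrix (Fin 4) (Fin 4) ℝ) (x : EuclideanSpace ℝ (Fin 4)) :
    quadForm A x = ⟪x, mulVecE A x⟫ := (inner_mulVecE A x x).symm

lemma quadForm_smul_sub (A B : Matrix (Fin 4) (Fin 4) ℝ) (c : ℝ) (x : EuclideanSpace ℝ (Fin 4)) :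
    quadForm (c • A - B) x = c * quadForm A x - quadForm B x := by
  simp only [quadForm, Finset.mul_sum, ← Finset.sum_sub_distrib, Matrix.sub_apply,
    Matrix.smul_apply, smul_eq_mul]
  congr 1; ext i; congr 1; ext j; ring

lemma coord_deriv {f : ℝ → EuclideanSpace ℝ (Fin 4)} {f' : EuclideanSpace ℝ (Fin 4)} {t : ℝ}
    (h : HasDerivAt f f' t) (i : Fin 4) : HasDerivAt (fun s => f s i) (f' i) t := by
  exact (EuclideanSpace.proj (𝕜 := ℝ) i).hasFDerivAt.comp_hasDerivAt t h

lemma sum_sym (A : Matrix (Fin 4) (Fin 4) ℝ) (hs : A.IsSymm) (u v : EuclideanSpace ℝ (Fin 4)) :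
    ∑ i, ∑ j, u i * A i j * v j = ∑ i, ∑ j, v i * A i j * u j := by
  rw [Finset.sum_comm]
  refine Finset.sum_congr rfl fun j _ => Finset.sum_congr rfl fun i _ => ?_
  rw [← hs.apply i j]; ring

lemma mulVecE_smul (A : Matrix (Fin 4) (Fin 4) ℝ) (c : ℝ) (x : EuclideanSpace ℝ (Fin 4)) :
    mulVecE A (c • x) = c • mulVecE A x := by
  simp only [mulVecE]
  ext i
  simp [Matrix.mulVec_smul]

set_option maxHeartbeats 1000000 in
/-- Theorem 1, GUUB: the joint-layer Lyapunov function satisfies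
`V(t) ≤ V(0)e^{−δt} + (ε/δ)(1 − e^{−δt})` for all `t ≥ 0`. -/
theorem stmt4
    (ξ η ξd ηd : ℝ → EuclideanSpace ℝ (Fin 4))
    (hξ : ∀ t, 0 ≤ t → HasDerivAt ξ (ξd t) t) (hη : ∀ t, 0 ≤ t → HasDerivAt η (ηd t) t)
    (z₁ : ℝ → WithLp 2 (EuclideanSpace ℝ (Fin 4) × EuclideanSpace ℝ (Fin 4)))
    (hz₁ : z₁ = fun t => stack (ξ t) (η t))
    (c_m c_M : ℝ) (hcm : 0 < c_m) (hcmM : c_m ≤ c_M)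
    (M Md : ℝ → Matrix (Fin 4) (Fin 4) ℝ)
    (hM : ∀ (i j : Fin 4) (t : ℝ), 0 ≤ t → HasDerivAt (fun s => M s i j) (Md t i j) t)
    (hMsymm : ∀ t, (M t).IsSymm)
    (hMlow : ∀ t (x : EuclideanSpace ℝ (Fin 4)), c_m * ‖x‖ ^ 2 ≤ quadForm (M t) x)
    (hMhigh : ∀ t (x : EuclideanSpace ℝ (Fin 4)), quadForm (M t) x ≤ c_M * ‖x‖ ^ 2)
    (C B : ℝ → Matrix (Fin 4) (Fin 4) ℝ)
    (hskew : ∀ t, 0 ≤ t → quadForm ((1 / 2 : ℝ) • Md t - C t) (η t) = 0)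
    (Blo : ℝ) (hBlo : (1 / 4 : ℝ) ≤ Blo)
    (hB : ∀ t (x : EuclideanSpace ℝ (Fin 4)), Blo * ‖x‖ ^ 2 ≤ quadForm (B t) x)
    (ρ₁ ρ₂ ρ₃ : ℝ) (hρ₁ : 0 ≤ ρ₁) (hρ₂ : 0 ≤ ρ₂) (hρ₃ : 0 ≤ ρ₃)
    (ρ : ℝ → ℝ) (hρ : ρ = fun s => ρ₁ + ρ₂ * s + ρ₃ * s ^ 2)
    (χ : ℝ → EuclideanSpace ℝ (Fin 4)) (hχ : ∀ t, 0 ≤ t → ‖χ t‖ ≤ ρ ‖z₁ t‖)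
    (α k₁ ε : ℝ) (hα : 0 < α) (hk₁ : 0 < k₁) (hε : 0 < ε)
    (hloop₁ : ∀ t, 0 ≤ t → ξd t = η t - α • ξ t)
    (hloop₂ : ∀ t, 0 ≤ t → mulVecE (M t) (ηd t)
      = χ t - mulVecE (C t) (η t) - ξ t
        - mulVecE (B t) (k₁ • η t + ((1 / ε) * (ρ ‖z₁ t‖) ^ 2) • η t))
    (V : ℝ → ℝ)
    (hV : V = fun t => (1 / 2) * ‖ξ t‖ ^ 2 + (1 / 2) * quadForm (M t) (η t))
    (b δ : ℝ) (hb : b = max (1 / 2) (c_M / 2)) (hδ : δ = min α (Blo * k₁) / b) :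
    ∀ t, 0 ≤ t →
      V t ≤ V 0 * Real.exp (-δ * t) + (ε / δ) * (1 - Real.exp (-δ * t)) := by
  -- basic positivity
  have hBlo0 : 0 < Blo := lt_of_lt_of_le (by norm_num) hBlo
  have hbpos : 0 < b := lt_of_lt_of_le one_half_pos (hb ▸ le_max_left _ _)
  have hmpos : 0 < min α (Blo * k₁) := lt_min hα (mul_pos hBlo0 hk₁)
  have hδpos : 0 < δ := hδ ▸ div_pos hmpos hbpos
  -- the candidate derivative of V
  set Vd : ℝ → ℝ := fun t =>
    ⟪ξ t, ξd t⟫ + ⟪η t, mulVecE (M t) (ηd t)⟫ + (1 / 2) * quadForm (Md t) (η t) with hVdDef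
  have hVder : ∀ t, 0 ≤ t → HasDerivAt V (Vd t) t := by
    intro t ht
    have hξt := hξ t ht
    have hηt := hη t ht
    have h1 : HasDerivAt (fun s => ⟪ξ s, ξ s⟫) (⟪ξ t, ξd t⟫ + ⟪ξd t, ξ t⟫) t :=
      hξt.inner ℝ hξt
    have h2 : HasDerivAt (fun s => quadForm (M s) (η s))
        (∑ i, ∑ j, ((ηd t i * M t i j + η t i * Md t i j) * η t j +
          η t i * M t i j * ηd t j)) t := by
      unfold quadForm
      apply HasDerivAt.fun_sum
      intro i _
      apply HasDerivAt.fun_sum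
      intro j _
      exact ((coord_deriv hηt i).mul (hM i j t ht)).mul (coord_deriv hηt j)
    have hq : (∑ i, ∑ j, ((ηd t i * M t i j + η t i * Md t i j) * η t j +
          η t i * M t i j * ηd t j))
        = 2 * ⟪η t, mulVecE (M t) (ηd t)⟫ + quadForm (Md t) (η t) := by
      have hsplit : (∑ i, ∑ j, ((ηd t i * M t i j + η t i * Md t i j) * η t j +
            η t i * M t i j * ηd t j))
          = (∑ i, ∑ j, ηd t i * M t i j * η t j) + (∑ i, ∑ j, η t i * Md t i j * η t j)
            + (∑ i, ∑ j, η t i * M t i j * ηd t j) := by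
        rw [← Finset.sum_add_distrib, ← Finset.sum_add_distrib]
        refine Finset.sum_congr rfl fun i _ => ?_
        rw [← Finset.sum_add_distrib, ← Finset.sum_add_distrib]
        refine Finset.sum_congr rfl fun j _ => ?_
        ring
      rw [hsplit, sum_sym (M t) (hMsymm t) (ηd t) (η t), inner_mulVecE]
      unfold quadForm
      ring
    have hVeq : V = fun s => (1 / 2) * ⟪ξ s, ξ s⟫ + (1 / 2) * quadForm (M s) (η s) := by
      rw [hV]
      funext s
      rw [real_inner_self_eq_norm_sq]
    rw [hVeq]
    have := (h1.const_mul (1 / 2 : ℝ)).add (h2.const_mul (1 / 2 : ℝ))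
    refine this.congr_deriv ?_
    have hc : ⟪ξd t, ξ t⟫ = ⟪ξ t, ξd t⟫ := real_inner_comm _ _
    rw [hq, hc]
    ring
  -- the key differential inequality
  have hVb : ∀ t, 0 ≤ t → Vd t ≤ -δ * V t + ε := by
    intro t ht
    set nξ := ‖ξ t‖ with hnξ
    set nη := ‖η t‖ with hnη
    set r := ρ ‖z₁ t‖ with hr
    have hr0 : 0 ≤ r := by
      rw [hr, hρ]
      have h0 : (0:ℝ) ≤ ‖z₁ t‖ := norm_nonneg _
      positivity
    have hterm1 : ⟪ξ t, ξd t⟫ = ⟪ξ t, η t⟫ - α * nξ ^ 2 := by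
      rw [hloop₁ t ht, inner_sub_right, real_inner_smul_right, real_inner_self_eq_norm_sq]
    have hterm2 : ⟪η t, mulVecE (M t) (ηd t)⟫
        = ⟪η t, χ t⟫ - quadForm (C t) (η t) - ⟪η t, ξ t⟫
          - (k₁ + (1 / ε) * r ^ 2) * quadForm (B t) (η t) := by
      rw [hloop₂ t ht]
      have hsm : k₁ • η t + ((1 / ε) * (ρ ‖z₁ t‖) ^ 2) • η t
          = (k₁ + (1 / ε) * r ^ 2) • η t := by rw [← add_smul, hr]
      rw [hsm, inner_sub_right, inner_sub_right, inner_sub_right, mulVecE_smul,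
        real_inner_smul_right, ← quadForm_eq_inner, ← quadForm_eq_inner]
    have hskew' : (1 / 2) * quadForm (Md t) (η t) - quadForm (C t) (η t) = 0 := by
      have h := hskew t ht
      rwa [quadForm_smul_sub] at h
    have hVdeq : Vd t = -α * nξ ^ 2 + ⟪η t, χ t⟫
        - (k₁ + (1 / ε) * r ^ 2) * quadForm (B t) (η t) := by
      rw [hVdDef]
      simp only [hterm1, hterm2]
      rw [real_inner_comm (ξ t) (η t)]
      linarith [hskew']
    have hχb : ⟪η t, χ t⟫ ≤ nη * r :=
      (real_inner_le_norm _ _).trans (mul_le_mul_of_nonneg_left (hχ t ht) (norm_nonneg _))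
    have hqB : Blo * nη ^ 2 ≤ quadForm (B t) (η t) := hB t (η t)
    have hkf : (0:ℝ) ≤ k₁ + (1 / ε) * r ^ 2 := by positivity
    have hmul : (k₁ + (1 / ε) * r ^ 2) * (Blo * nη ^ 2)
        ≤ (k₁ + (1 / ε) * r ^ 2) * quadForm (B t) (η t) :=
      mul_le_mul_of_nonneg_left hqB hkf
    -- the square-completion bound : nη * r ≤ (1/ε) * r^2 * (Blo * nη^2) + ε
    have hkey : nη * r ≤ (1 / ε) * r ^ 2 * (Blo * nη ^ 2) + ε := by
      rw [← sub_nonneg]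
      have heq : (1 / ε) * r ^ 2 * (Blo * nη ^ 2) + ε - nη * r
          = (1 / ε) * (r ^ 2 * Blo * nη ^ 2 - ε * (r * nη) + ε ^ 2) := by
        field_simp
        ring
      rw [heq]
      apply mul_nonneg (by positivity)
      nlinarith [sq_nonneg (r * nη - 2 * ε),
        mul_nonneg (by linarith : (0:ℝ) ≤ 4 * Blo - 1)
          (mul_nonneg (sq_nonneg r) (sq_nonneg nη))]
    have hVd_le : Vd t ≤ -α * nξ ^ 2 - Blo * k₁ * nη ^ 2 + ε := by
      rw [hVdeq]
      nlinarith [hmul, hχb, hkey]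
    -- compare with V
    have hb1 : (1:ℝ) / 2 ≤ b := hb ▸ le_max_left _ _
    have hb2 : c_M / 2 ≤ b := hb ▸ le_max_right _ _
    have hVle : V t ≤ b * (nξ ^ 2 + nη ^ 2) := by
      rw [hV]
      have h1 := hMhigh t (η t)
      nlinarith [sq_nonneg nξ, sq_nonneg nη]
    have hδV : δ * V t ≤ min α (Blo * k₁) * (nξ ^ 2 + nη ^ 2) := by
      have h1 : δ * V t ≤ δ * (b * (nξ ^ 2 + nη ^ 2)) :=
        mul_le_mul_of_nonneg_left hVle hδpos.le
      have h2 : δ * (b * (nξ ^ 2 + nη ^ 2)) = min α (Blo * k₁) * (nξ ^ 2 + nη ^ 2) := by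
        rw [hδ]
        field_simp
      linarith
    have hmin1 : min α (Blo * k₁) * nξ ^ 2 ≤ α * nξ ^ 2 :=
      mul_le_mul_of_nonneg_right (min_le_left _ _) (sq_nonneg _)
    have hmin2 : min α (Blo * k₁) * nη ^ 2 ≤ Blo * k₁ * nη ^ 2 :=
      mul_le_mul_of_nonneg_right (min_le_right _ _) (sq_nonneg _)
    nlinarith [hVd_le, hδV, hmin1, hmin2]
  -- Grönwall argument
  set G : ℝ → ℝ := fun s => (V s - ε / δ) * Real.exp (δ * s) with hGdef
  have hGd : ∀ s, 0 ≤ s →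
      HasDerivAt G ((Vd s + δ * (V s - ε / δ)) * Real.exp (δ * s)) s := by
    intro s hs
    have h1 : HasDerivAt (fun u => Real.exp (δ * u)) (δ * Real.exp (δ * s)) s := by
      have := (Real.hasDerivAt_exp (δ * s)).comp s ((hasDerivAt_id s).const_mul δ)
      exact this.congr_deriv (by ring)
    have := ((hVder s hs).sub_const (ε / δ)).mul h1
    refine this.congr_deriv ?_
    ring
  have hGanti : AntitoneOn G (Set.Ici (0:ℝ)) := by
    apply antitoneOn_of_hasDerivWithinAt_nonpos (convex_Ici 0)
      (f' := fun s => (Vd s + δ * (V s - ε / δ)) * Real.exp (δ * s))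
    · intro s hs
      exact (hGd s hs).continuousAt.continuousWithinAt
    · intro s hs
      rw [interior_Ici] at hs
      exact (hGd s hs.le).hasDerivWithinAt
    · intro s hs
      rw [interior_Ici] at hs
      have h1 := hVb s hs.le
      have h2 : δ * (ε / δ) = ε := mul_div_cancel₀ ε hδpos.ne'
      have h3 : Vd s + δ * (V s - ε / δ) ≤ 0 := by
        rw [mul_sub, h2]
        linarith
      exact mul_nonpos_of_nonpos_of_nonneg h3 (Real.exp_nonneg _)
  intro t ht
  have hGle : G t ≤ G 0 := hGanti Set.self_mem_Ici ht ht
  have hG0 : G 0 = V 0 - ε / δ := by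
    rw [hGdef]
    simp
  have hexp : (0:ℝ) < Real.exp (δ * t) := Real.exp_pos _
  have h2 : V t - ε / δ ≤ (V 0 - ε / δ) * Real.exp (-δ * t) := by
    have hle : (V t - ε / δ) * Real.exp (δ * t) ≤ V 0 - ε / δ := by
      rw [← hG0]; exact hGle
    rw [neg_mul, Real.exp_neg, ← div_eq_mul_inv]
    exact (le_div_iff₀ hexp).2 hle
  have hfin : V 0 * Real.exp (-δ * t) + (ε / δ) * (1 - Real.exp (-δ * t))
      = (V 0 - ε / δ) * Real.exp (-δ * t) + ε / δ := by ring
  rw [hfin]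
  linarith
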